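/- Let v : X → ℝ satisfy v(x) ≥ 0 for all x and v(x₀) > 0 for at least one x₀ ∈ X, and let f ∈ L(X). Define P̃(x,y) = P(x,y)/(1+v(x)) and f̃(x) = f(x)/(1+v(x)). Then I − P̃ is invertible, (I − P̃)^{-1} = ∑_{n=0}^∞ P̃^n (convergent series), and the equation Δu − v·u = f has the unique solution u = −(I − P̃)^{-1} f̃. -/

import Mathlib

open Matrix Finset

/-- The Laplacian `Δu = Pu − u` acting on complex functions. -/
noncomputable def lap {X : Type*} [Fintype X] (P : Matrix X X ℝ) (u : X → ℂ) (x : X) : ℂ :=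
  (∑ y, (P x y : ℂ) * u y) - u x

/-- The transition matrix associated with a potential: `P̃(x,y) = P(x,y)/(1+v(x))`. -/
noncomputable def Ppot {X : Type*} (P : Matrix X X ℝ) (v : X → ℝ) : Matrix X X ℝ :=
  Matrix.of fun x y => P x y / (1 + v x)

section Aux

variable {X : Type*} [Fintype X] [DecidableEq X]

lemma pow_entry_nonneg' {A : Matrix X X ℝ} (hA : ∀ x y, 0 ≤ A x y) :
    ∀ n x y, 0 ≤ (A ^ n) x y := by
  intro n
  induction n with
  | zero =>
    intro x y
    rw [pow_zero]
    by_cases h : x = y <;> simp [Matrix.one_apply, h]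
  | succ n ih =>
    intro x y
    rw [pow_succ, Matrix.mul_apply]
    exact Finset.sum_nonneg fun z _ => mul_nonneg (ih x z) (hA z y)

lemma rowsum_add' (A : Matrix X X ℝ) (m k : ℕ) (x : X) :
    ∑ y, (A ^ (m + k)) x y = ∑ z, (A ^ m) x z * ∑ y, (A ^ k) z y := by
  rw [pow_add]
  simp only [Matrix.mul_apply]
  rw [Finset.sum_comm]
  exact Finset.sum_congr rfl fun z _ => (Finset.mul_sum _ _ _).symm

lemma rowsum_le_one' {A : Matrix X X ℝ} (hA : ∀ x y, 0 ≤ A x y)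
    (h : ∀ x, ∑ y, A x y ≤ 1) : ∀ n x, ∑ y, (A ^ n) x y ≤ 1 := by
  intro n
  induction n with
  | zero =>
    intro x
    rw [pow_zero]
    simp [Matrix.one_apply]
  | succ n ih =>
    intro x
    calc ∑ y, (A ^ (n + 1)) x y = ∑ z, (A ^ n) x z * ∑ y, (A ^ 1) z y := rowsum_add' A n 1 x
      _ ≤ ∑ z, (A ^ n) x z * 1 := by
          refine Finset.sum_le_sum fun z _ => ?_
          exact mul_le_mul_of_nonneg_left (by simpa using h z) (pow_entry_nonneg' hA n x z)
      _ = ∑ z, (A ^ n) x z := by simp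
      _ ≤ 1 := ih x

lemma pow_pos_transfer' {A B : Matrix X X ℝ} (hB : ∀ x y, 0 ≤ B x y)
    (hA : ∀ x y, 0 ≤ A x y) (h : ∀ x y, 0 < B x y → 0 < A x y) :
    ∀ n x y, 0 < (B ^ n) x y → 0 < (A ^ n) x y := by
  intro n
  induction n with
  | zero => intro x y; rw [pow_zero, pow_zero]; exact fun h => h
  | succ n ih =>
    intro x y hpos
    rw [pow_succ, Matrix.mul_apply] at hpos
    have hex : ∃ z ∈ Finset.univ (α := X), 0 < (B ^ n) x z * B z y := by
      by_contra hc
      push_neg at hc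
      have : ∑ z, (B ^ n) x z * B z y ≤ 0 := Finset.sum_nonpos fun z hz => hc z hz
      linarith
    obtain ⟨z, _, hz⟩ := hex
    have hz1 : 0 < (B ^ n) x z ∧ 0 < B z y := by
      rcases mul_pos_iff.mp hz with h1 | h1
      · exact h1
      · exact absurd h1.2 (not_lt.mpr (hB z y))
    rw [pow_succ, Matrix.mul_apply]
    have hterm : 0 < (A ^ n) x z * A z y := mul_pos (ih x z hz1.1) (h z y hz1.2)
    have : (A ^ n) x z * A z y ≤ ∑ w, (A ^ n) x w * A w y :=
      Finset.single_le_sum (fun w _ => mul_nonneg (pow_entry_nonneg' hA n x w) (hA w y))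
        (Finset.mem_univ z)
    linarith

lemma summable_pow_entry' [Nonempty X] {A : Matrix X X ℝ} (hA : ∀ x y, 0 ≤ A x y)
    (hle : ∀ x, ∑ y, A x y ≤ 1) {N : ℕ} (hN1 : 1 ≤ N)
    (hNlt : ∀ x, ∑ y, (A ^ N) x y < 1) :
    ∀ x y, Summable fun n : ℕ => (A ^ n) x y := by
  set c : ℝ := Finset.univ.sup' Finset.univ_nonempty (fun x => ∑ y, (A ^ N) x y) with hc
  have hc1 : c < 1 := by
    rw [hc]
    exact (Finset.sup'_lt_iff _).mpr fun x _ => hNlt x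
  have hc0 : 0 ≤ c := by
    obtain ⟨x⟩ := ‹Nonempty X›
    refine le_trans ?_ (Finset.le_sup' (fun x => ∑ y, (A ^ N) x y) (Finset.mem_univ x))
    exact Finset.sum_nonneg fun y _ => pow_entry_nonneg' hA N x y
  have hcle : ∀ x, ∑ y, (A ^ N) x y ≤ c := fun x =>
    Finset.le_sup' (fun x => ∑ y, (A ^ N) x y) (Finset.mem_univ x)
  -- row sums decay geometrically in blocks of N
  have hblock : ∀ q r x, ∑ y, (A ^ (N * q + r)) x y ≤ c ^ q := by
    intro q
    induction q with
    | zero => intro r x; simpa using rowsum_le_one' hA hle r x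
    | succ q ih =>
      intro r x
      have hstep : N * (q + 1) + r = N + (N * q + r) := by ring
      rw [hstep, rowsum_add' A N (N * q + r) x]
      calc ∑ z, (A ^ N) x z * ∑ y, (A ^ (N * q + r)) z y
          ≤ ∑ z, (A ^ N) x z * c ^ q := by
            refine Finset.sum_le_sum fun z _ => ?_
            exact mul_le_mul_of_nonneg_left (ih r z) (pow_entry_nonneg' hA N x z)
        _ = (∑ z, (A ^ N) x z) * c ^ q := by rw [Finset.sum_mul]
        _ ≤ c * c ^ q := mul_le_mul_of_nonneg_right (hcle x) (pow_nonneg hc0 q)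
        _ = c ^ (q + 1) := (pow_succ' c q).symm
  have hentry : ∀ n x y, (A ^ n) x y ≤ c ^ (n / N) := by
    intro n x y
    have h1 : (A ^ n) x y ≤ ∑ y', (A ^ n) x y' :=
      Finset.single_le_sum (fun y' _ => pow_entry_nonneg' hA n x y') (Finset.mem_univ y)
    have h2 : n = N * (n / N) + n % N := by
      have := Nat.div_add_mod n N
      omega
    calc (A ^ n) x y ≤ ∑ y', (A ^ n) x y' := h1
      _ = ∑ y', (A ^ (N * (n / N) + n % N)) x y' := by rw [← h2]
      _ ≤ c ^ (n / N) := hblock (n / N) (n % N) x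
  have hgeo : Summable fun n : ℕ => c ^ (n / N) := by
    haveI : NeZero N := ⟨by omega⟩
    rw [← Equiv.summable_iff (Nat.divModEquiv N).symm]
    have heq : ((fun n : ℕ => c ^ (n / N)) ∘ (Nat.divModEquiv N).symm) =
        fun p : ℕ × Fin N => c ^ p.1 := by
      funext p
      simp only [Function.comp_apply, Nat.divModEquiv_symm_apply]
      congr 1
      have hlt : (p.2 : ℕ) < N := p.2.isLt
      have : (p.1 * N + (p.2 : ℕ)) / N = p.1 := by
        rw [mul_comm, Nat.mul_add_div (by omega : 0 < N), Nat.div_eq_of_lt hlt]; omega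
      rw [this]
    rw [heq]
    have h1 : Summable fun q : ℕ => c ^ q := summable_geometric_of_lt_one hc0 hc1
    have h2 : Summable fun _ : Fin N => (1 : ℝ) := Summable.of_finite
    have := h1.mul_of_nonneg h2 (fun q => pow_nonneg hc0 q) (fun _ => zero_le_one)
    simpa using this
  intro x y
  exact Summable.of_nonneg_of_le (fun n => pow_entry_nonneg' hA n x y) (fun n => hentry n x y) hgeo

lemma neumann_right_inverse' {A : Matrix X X ℝ}
    (hsum : ∀ x y, Summable fun n : ℕ => (A ^ n) x y) :
    (1 - A) * (Matrix.of fun x y => ∑' n : ℕ, (A ^ n) x y) = 1 := by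
  ext x y
  rw [Matrix.mul_apply]
  have key : ∀ z, ((1 : Matrix X X ℝ) x z - A x z) * (∑' n : ℕ, (A ^ n) z y) =
      (if x = z then ∑' n : ℕ, (A ^ n) z y else 0) - ∑' n : ℕ, A x z * (A ^ n) z y := by
    intro z
    rw [sub_mul, tsum_mul_left]
    congr 1
    rw [Matrix.one_apply]
    split <;> simp
  simp only [Matrix.sub_apply, Matrix.of_apply, key]
  rw [Finset.sum_sub_distrib, Finset.sum_ite_eq, if_pos (Finset.mem_univ x)]
  have hswap : ∑ z, ∑' n : ℕ, A x z * (A ^ n) z y = ∑' n : ℕ, ∑ z, A x z * (A ^ n) z y :=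
    (Summable.tsum_finsetSum fun z _ => (hsum z y).mul_left _).symm
  rw [hswap]
  have hpow : ∀ n : ℕ, ∑ z, A x z * (A ^ n) z y = (A ^ (n + 1)) x y := by
    intro n
    rw [pow_succ']
    rw [Matrix.mul_apply]
  simp only [hpow]
  have hshift : (A ^ 0) x y + ∑' n : ℕ, (A ^ (n + 1)) x y = ∑' n : ℕ, (A ^ n) x y := by
    have := Summable.sum_add_tsum_nat_add (f := fun n => (A ^ n) x y) 1 (hsum x y)
    simpa using this
  have : ∑' n : ℕ, (A ^ (n + 1)) x y = ∑' n : ℕ, (A ^ n) x y - (A ^ 0) x y := by linarith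
  rw [this]
  simp [Matrix.one_apply, pow_zero]

lemma cast_mul_entry' {B C : Matrix X X ℝ} (h : B * C = 1) (x y : X) :
    ∑ z, ((B x z : ℝ) : ℂ) * ((C z y : ℝ) : ℂ) = if x = y then 1 else 0 := by
  have h' := congrFun (congrFun h x) y
  rw [Matrix.mul_apply] at h'
  calc ∑ z, ((B x z : ℝ) : ℂ) * ((C z y : ℝ) : ℂ)
      = ((∑ z, B x z * C z y : ℝ) : ℂ) := by push_cast; rfl
    _ = (((1 : Matrix X X ℝ) x y : ℝ) : ℂ) := by rw [h']
    _ = if x = y then 1 else 0 := by rw [Matrix.one_apply]; split <;> simp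

lemma solve_linear' {B : Matrix X X ℝ} (h1 : B * B⁻¹ = 1) (h2 : B⁻¹ * B = 1) (w : X → ℂ) :
    (∀ u : X → ℂ, (∀ x, ∑ y, ((B x y : ℝ) : ℂ) * u y = w x) →
      ∀ x, u x = ∑ y, ((B⁻¹ x y : ℝ) : ℂ) * w y) ∧
    (∀ x, ∑ y, ((B x y : ℝ) : ℂ) * ∑ z, ((B⁻¹ y z : ℝ) : ℂ) * w z = w x) := by
  constructor
  · intro u hu x
    calc u x = ∑ y, (if x = y then 1 else 0) * u y := by simp
      _ = ∑ y, (∑ z, ((B⁻¹ x z : ℝ) : ℂ) * ((B z y : ℝ) : ℂ)) * u y := by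
          refine Finset.sum_congr rfl fun y _ => ?_
          rw [cast_mul_entry' h2 x y]
      _ = ∑ z, ((B⁻¹ x z : ℝ) : ℂ) * ∑ y, ((B z y : ℝ) : ℂ) * u y := by
          simp_rw [Finset.sum_mul]
          rw [Finset.sum_comm]
          simp_rw [Finset.mul_sum, mul_assoc]
      _ = ∑ z, ((B⁻¹ x z : ℝ) : ℂ) * w z := Finset.sum_congr rfl fun z _ => by rw [hu z]
  · intro x
    calc ∑ y, ((B x y : ℝ) : ℂ) * ∑ z, ((B⁻¹ y z : ℝ) : ℂ) * w z
        = ∑ z, (∑ y, ((B x y : ℝ) : ℂ) * ((B⁻¹ y z : ℝ) : ℂ)) * w z := by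
          simp_rw [Finset.mul_sum]
          rw [Finset.sum_comm]
          simp_rw [Finset.sum_mul, mul_assoc]
      _ = ∑ z, (if x = z then 1 else 0) * w z := by
          refine Finset.sum_congr rfl fun z _ => ?_
          rw [cast_mul_entry' h1 x z]
      _ = w x := by simp

end Aux

/-- Poisson equation with a potential `v ≥ 0`, `v ≢ 0`:
`I − P̃` is invertible with `(I − P̃)⁻¹ = ∑ₙ P̃ⁿ` (convergent series), and
`Δu − v·u = f` has the unique solution `u = −(I − P̃)⁻¹ f̃`, `f̃ = f/(1+v)`. -/
theorem poisson_with_potential {X : Type*} [Fintype X] [DecidableEq X]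
    (P : Matrix X X ℝ)
    (hcard : 1 < Fintype.card X)
    (hnonneg : ∀ x y, 0 ≤ P x y)
    (hrow : ∀ x, ∑ y, P x y = 1)
    (hirr : ∀ x y, ∃ n, 1 ≤ n ∧ 0 < (P ^ n) x y)
    (v : X → ℝ) (hv : ∀ x, 0 ≤ v x) (hv' : ∃ x, 0 < v x)
    (f : X → ℂ) :
    IsUnit (1 - Ppot P v) ∧
    (∀ x y, Summable fun n : ℕ => ((Ppot P v) ^ n) x y) ∧
    ((1 - Ppot P v)⁻¹ = Matrix.of fun x y => ∑' n : ℕ, ((Ppot P v) ^ n) x y) ∧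
    (∃! u : X → ℂ, ∀ x, lap P u x - (v x : ℂ) * u x = f x) ∧
    (∀ u : X → ℂ, (∀ x, lap P u x - (v x : ℂ) * u x = f x) →
      ∀ x, u x = -∑ y, (((1 - Ppot P v)⁻¹ x y : ℝ) : ℂ) *
        (f y / ((1 + v y : ℝ) : ℂ))) := by
  obtain ⟨x₀, hx₀⟩ := hv'
  haveI : Nonempty X := ⟨x₀⟩
  set A := Ppot P v with hAdef
  have h1v : ∀ x, (0:ℝ) < 1 + v x := fun x => by linarith [hv x]
  have hA0 : ∀ x y, 0 ≤ A x y := fun x y => div_nonneg (hnonneg x y) (h1v x).le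
  have hrowA : ∀ x, ∑ y, A x y = 1 / (1 + v x) := by
    intro x
    simp only [hAdef, Ppot, Matrix.of_apply]
    rw [← Finset.sum_div, hrow]
  have hle : ∀ x, ∑ y, A x y ≤ 1 := by
    intro x
    rw [hrowA, div_le_one (h1v x)]
    linarith [hv x]
  have hposA : ∀ x y, 0 < P x y → 0 < A x y := fun x y h => div_pos h (h1v x)
  choose g hg1 hg2 using fun x => hirr x x₀
  set N : ℕ := Finset.univ.sup g + 1 with hNdef
  have hN1 : 1 ≤ N := by omega
  have hNlt : ∀ x, ∑ y, (A ^ N) x y < 1 := by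
    intro x
    have hgx : g x + 1 ≤ N := by
      have := Finset.le_sup (f := g) (Finset.mem_univ x)
      omega
    have hstrict : ∑ y, (A ^ (g x + 1)) x y < 1 := by
      rw [rowsum_add' A (g x) 1 x]
      have hAx₀ : 0 < (A ^ (g x)) x x₀ :=
        pow_pos_transfer' hnonneg hA0 hposA _ _ _ (hg2 x)
      have hrow1 : ∀ z, ∑ y, (A ^ 1) z y ≤ 1 := by intro z; simpa using hle z
      have hrow1x₀ : ∑ y, (A ^ 1) x₀ y < 1 := by
        rw [pow_one, hrowA, div_lt_one (h1v x₀)]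
        linarith
      calc ∑ z, (A ^ (g x)) x z * ∑ y, (A ^ 1) z y
          < ∑ z, (A ^ (g x)) x z * 1 := by
            refine Finset.sum_lt_sum
              (fun z _ => mul_le_mul_of_nonneg_left (hrow1 z) (pow_entry_nonneg' hA0 _ x z))
              ⟨x₀, Finset.mem_univ x₀, ?_⟩
            exact mul_lt_mul_of_pos_left hrow1x₀ hAx₀
        _ = ∑ z, (A ^ (g x)) x z := by simp
        _ ≤ 1 := rowsum_le_one' hA0 hle _ x
    have hmono : ∑ y, (A ^ N) x y ≤ ∑ y, (A ^ (g x + 1)) x y := by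
      have hsplit : N = (g x + 1) + (N - (g x + 1)) := by omega
      rw [hsplit, rowsum_add' A (g x + 1) (N - (g x + 1)) x]
      calc ∑ z, (A ^ (g x + 1)) x z * ∑ y, (A ^ (N - (g x + 1))) z y
          ≤ ∑ z, (A ^ (g x + 1)) x z * 1 :=
            Finset.sum_le_sum fun z _ =>
              mul_le_mul_of_nonneg_left (rowsum_le_one' hA0 hle _ z) (pow_entry_nonneg' hA0 _ x z)
        _ = _ := by simp
    linarith
  have hsum : ∀ x y, Summable fun n : ℕ => (A ^ n) x y :=
    summable_pow_entry' hA0 hle hN1 hNlt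
  have hMS : (1 - A) * (Matrix.of fun x y => ∑' n : ℕ, (A ^ n) x y) = 1 :=
    neumann_right_inverse' hsum
  have hUnit : IsUnit (1 - A) := IsUnit.of_mul_eq_one _ hMS
  have hInv : (1 - A)⁻¹ = Matrix.of fun x y => ∑' n : ℕ, (A ^ n) x y :=
    Matrix.inv_eq_right_inv hMS
  have hinv1 : (1 - A) * (1 - A)⁻¹ = 1 := by rw [hInv]; exact hMS
  have hinv2 : (1 - A)⁻¹ * (1 - A) = 1 := mul_eq_one_comm.mp hinv1
  have hfeq : ∀ (u : X → ℂ) (x : X),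
      (lap P u x - (v x : ℂ) * u x = f x) ↔
      (∑ y, (((1 - A) x y : ℝ) : ℂ) * u y = -(f x / ((1 + v x : ℝ) : ℂ))) := by
    intro u x
    have hc0 : ((1 + v x : ℝ) : ℂ) ≠ 0 :=
      Complex.ofReal_ne_zero.mpr (h1v x).ne'
    have hcast : ((1 + v x : ℝ) : ℂ) = 1 + (v x : ℂ) := by push_cast; ring
    have hS : ∑ y, (((1 - A) x y : ℝ) : ℂ) * u y
        = u x - (∑ y, (P x y : ℂ) * u y) / ((1 + v x : ℝ) : ℂ) := by
      have hterm : ∀ y, (((1 - A) x y : ℝ) : ℂ) * u y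
          = (if x = y then u y else 0) - ((P x y : ℂ) * u y) / ((1 + v x : ℝ) : ℂ) := by
        intro y
        have hval : (1 - A) x y = (if x = y then (1:ℝ) else 0) - P x y / (1 + v x) := by
          simp [hAdef, Ppot, Matrix.sub_apply, Matrix.one_apply]
        rw [hval]
        by_cases hxy : x = y <;> simp [hxy] <;> push_cast <;> ring
      simp_rw [hterm]
      rw [Finset.sum_sub_distrib, Finset.sum_ite_eq, if_pos (Finset.mem_univ x),
        ← Finset.sum_div]
    rw [hS]
    constructor
    · intro h
      have h' : (∑ y, (P x y : ℂ) * u y) - u x - (v x : ℂ) * u x = f x := by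
        simpa [lap, sub_sub] using h
      have goal' : (u x - (∑ y, (P x y : ℂ) * u y) / ((1 + v x : ℝ) : ℂ)) * ((1 + v x : ℝ) : ℂ)
          = (-(f x / ((1 + v x : ℝ) : ℂ))) * ((1 + v x : ℝ) : ℂ) := by
        rw [sub_mul, div_mul_cancel₀ _ hc0, neg_mul, div_mul_cancel₀ _ hc0, hcast]
        linear_combination -h'
      exact mul_right_cancel₀ hc0 goal'
    · intro h
      have h2 : (u x - (∑ y, (P x y : ℂ) * u y) / ((1 + v x : ℝ) : ℂ)) * ((1 + v x : ℝ) : ℂ)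
          = (-(f x / ((1 + v x : ℝ) : ℂ))) * ((1 + v x : ℝ) : ℂ) := by rw [h]
      rw [sub_mul, div_mul_cancel₀ _ hc0, neg_mul, div_mul_cancel₀ _ hc0, hcast] at h2
      simp only [lap]
      linear_combination -h2
  have hrep : ∀ u : X → ℂ, (∀ x, lap P u x - (v x : ℂ) * u x = f x) →
      ∀ x, u x = -∑ y, (((1 - A)⁻¹ x y : ℝ) : ℂ) * (f y / ((1 + v y : ℝ) : ℂ)) := by
    intro u hu x
    have h := (solve_linear' hinv1 hinv2 (fun x => -(f x / ((1 + v x : ℝ) : ℂ)))).1 u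
      (fun x => (hfeq u x).mp (hu x)) x
    rw [h]
    simp [mul_neg]
  refine ⟨hUnit, hsum, hInv,
    ⟨fun x => -∑ y, (((1 - A)⁻¹ x y : ℝ) : ℂ) * (f y / ((1 + v y : ℝ) : ℂ)), ?_, ?_⟩, hrep⟩
  · intro x
    apply (hfeq _ x).mpr
    have h := (solve_linear' hinv1 hinv2 (fun x => -(f x / ((1 + v x : ℝ) : ℂ)))).2 x
    simpa [mul_neg] using h
  · intro u hu
    funext x
    exact hrep u hu x
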